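/- arXiv:2212.02072 — 2 statements merged into one kernel-verified Lean document; each statement's English description precedes it below -/
import Mathlib

section
/- Let A, B, E be real n×n matrices with A stable (spectral radius < 1), E symmetric positive semi-definite, and suppose P is a symmetric matrix satisfying AᵀPA − P + E ⪯ 0. Then P ⪰ ∑_{t=0}^∞ (Aᵀ)ᵗ E Aᵗ ⪰ 0. -/
open Matrix

open Filter
open scoped NNReal ENNReal Topology

/-- A real matrix is (Schur) stable if all its complex eigenvalues
have modulus strictly less than 1 (spectral radius `< 1`). -/
def IsStable {n : ℕ} (A : Matrix (Fin n) (Fin n) ℝ) : Prop :=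
  ∀ z ∈ spectrum ℂ (A.map (algebraMap ℝ ℂ)), ‖z‖ < 1

lemma stable_pow_entry_bound {n : ℕ} (A : Matrix (Fin n) (Fin n) ℝ) (hA : IsStable A) :
    ∃ r : ℝ, 0 ≤ r ∧ r < 1 ∧ ∀ᶠ t in atTop, ∀ i j, |(A ^ t) i j| ≤ r ^ t := by
  rcases Nat.eq_zero_or_pos n with hn | hn
  · subst hn
    exact ⟨0, le_refl _, one_pos, Eventually.of_forall fun t i j => i.elim0⟩
  · letI : NormedRing (Matrix (Fin n) (Fin n) ℂ) := Matrix.linftyOpNormedRing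
    letI : NormedAlgebra ℂ (Matrix (Fin n) (Fin n) ℂ) := Matrix.linftyOpNormedAlgebra
    letI : CompleteSpace (Matrix (Fin n) (Fin n) ℂ) := FiniteDimensional.complete ℂ _
    haveI : Nonempty (Fin n) := ⟨⟨0, hn⟩⟩
    set B := A.map (algebraMap ℝ ℂ) with hB
    have hρ : spectralRadius ℂ B < 1 := by
      have := spectrum.spectralRadius_lt_of_forall_lt (a := B) (r := 1)
        (fun k hk => by simpa [← NNReal.coe_lt_coe, coe_nnnorm] using hA k hk)
      simpa using this
    obtain ⟨c, hc1, hc2⟩ := exists_between hρ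
    have hc_ne : c ≠ ⊤ := (hc2.trans_le le_top).ne
    set r : ℝ≥0 := c.toNNReal with hrdef
    have hcr : c = (r : ℝ≥0∞) := (ENNReal.coe_toNNReal hc_ne).symm
    have hr1 : r < 1 := by
      rw [hcr] at hc2; exact_mod_cast hc2
    have hgel := spectrum.pow_nnnorm_pow_one_div_tendsto_nhds_spectralRadius B
    have hev : ∀ᶠ k : ℕ in atTop, (‖B ^ k‖₊ : ℝ≥0∞) ^ (1/(k:ℝ)) < c :=
      hgel.eventually_lt_const hc1
    refine ⟨r, r.coe_nonneg, by exact_mod_cast hr1, ?_⟩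
    filter_upwards [hev, eventually_ge_atTop 1] with k hk hk1 i j
    have hkne : (k:ℝ) ≠ 0 := Nat.cast_ne_zero.mpr (by omega)
    have h2 : (‖B ^ k‖₊ : ℝ≥0∞) < c ^ (k:ℝ) := by
      calc (‖B ^ k‖₊ : ℝ≥0∞) = ((‖B ^ k‖₊ : ℝ≥0∞) ^ (1/(k:ℝ))) ^ (k:ℝ) := by
            rw [← ENNReal.rpow_mul, one_div, inv_mul_cancel₀ hkne, ENNReal.rpow_one]
        _ < c ^ (k:ℝ) := ENNReal.rpow_lt_rpow hk (by positivity)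
    have h3 : ‖B ^ k‖₊ ≤ r ^ k := by
      rw [hcr, ENNReal.rpow_natCast, ← ENNReal.coe_pow, ENNReal.coe_lt_coe] at h2
      exact h2.le
    have hBk : B ^ k = (A ^ k).map (algebraMap ℝ ℂ) := by
      rw [hB, ← RingHom.mapMatrix_apply, ← RingHom.mapMatrix_apply, ← map_pow]
    have hentry : ‖(B ^ k) i j‖₊ ≤ ‖B ^ k‖₊ := by
      rw [Matrix.linfty_opNNNorm_def]
      exact le_trans (Finset.single_le_sum (f := fun j => ‖(B ^ k) i j‖₊)
        (fun _ _ => by positivity) (Finset.mem_univ j))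
        (Finset.le_sup (f := fun i => ∑ j, ‖(B ^ k) i j‖₊) (Finset.mem_univ i))
    have habs : |(A ^ k) i j| = ‖(B ^ k) i j‖ := by
      rw [hBk]
      simp [Matrix.map_apply, Complex.norm_real, Real.norm_eq_abs]
    rw [habs]
    calc ‖(B ^ k) i j‖ ≤ (‖B ^ k‖₊ : ℝ) := hentry
      _ ≤ ((r ^ k : ℝ≥0) : ℝ) := by exact_mod_cast h3
      _ = (r:ℝ) ^ k := by push_cast; ring

lemma quad_congr {n : ℕ} (M B : Matrix (Fin n) (Fin n) ℝ) (x : Fin n → ℝ) :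
    x ⬝ᵥ (Bᵀ * M * B) *ᵥ x = (B *ᵥ x) ⬝ᵥ M *ᵥ (B *ᵥ x) := by
  rw [← Matrix.mulVec_mulVec, ← Matrix.mulVec_mulVec, Matrix.dotProduct_mulVec,
    Matrix.vecMul_transpose]

/-- Comparison lemma: if `A` is stable, `E ⪰ 0`, and `AᵀPA − P + E ⪯ 0` for a
symmetric `P`, then `P ⪰ ∑ₜ (Aᵀ)ᵗ E Aᵗ ⪰ 0`. -/
theorem lyapunov_inequality_lower_bound {n : ℕ}
    (A E P : Matrix (Fin n) (Fin n) ℝ)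
    (hA : IsStable A) (hE : E.PosSemidef) (hP : P.IsSymm)
    (hineq : (-(Aᵀ * P * A - P + E)).PosSemidef) :
    (P - ∑' t : ℕ, Aᵀ ^ t * E * A ^ t).PosSemidef ∧
    (∑' t : ℕ, Aᵀ ^ t * E * A ^ t).PosSemidef := by
  obtain ⟨r, hr0, hr1, hev⟩ := stable_pow_entry_bound A hA
  set f : ℕ → Matrix (Fin n) (Fin n) ℝ := fun t => Aᵀ ^ t * E * A ^ t with hf
  have hfPSD : ∀ t, (f t).PosSemidef := by
    intro t
    have := hE.conjTranspose_mul_mul_same (A ^ t)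
    simpa [hf, conjTranspose_eq_transpose_of_trivial, transpose_pow] using this
  -- entrywise bound
  set CE : ℝ := ∑ a, ∑ b, |E a b| with hCE
  have hbound : ∀ᶠ t in atTop, ∀ i j, |f t i j| ≤ CE * r ^ t := by
    filter_upwards [hev] with t ht i j
    have hfe : f t i j = ∑ b, (∑ a, (A ^ t) a i * E a b) * (A ^ t) b j := by
      simp [hf, Matrix.mul_apply, ← Matrix.transpose_pow, Matrix.transpose_apply,
        Finset.sum_mul]
    rw [hfe]
    have hrt1 : r ^ t ≤ 1 := pow_le_one₀ hr0 hr1.le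
    calc |∑ b, (∑ a, (A ^ t) a i * E a b) * (A ^ t) b j|
        ≤ ∑ b, |(∑ a, (A ^ t) a i * E a b) * (A ^ t) b j| := Finset.abs_sum_le_sum_abs _ _
      _ ≤ ∑ b, ∑ a, |E a b| * r ^ t := by
          refine Finset.sum_le_sum fun b _ => ?_
          rw [abs_mul]
          calc |∑ a, (A ^ t) a i * E a b| * |(A ^ t) b j|
              ≤ (∑ a, |(A ^ t) a i * E a b|) * |(A ^ t) b j| :=
                mul_le_mul_of_nonneg_right (Finset.abs_sum_le_sum_abs _ _) (abs_nonneg _)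
            _ ≤ (∑ a, |E a b| * r ^ t) * 1 := by
                refine mul_le_mul (Finset.sum_le_sum fun a _ => ?_)
                  ((ht b j).trans hrt1) (abs_nonneg _)
                  (Finset.sum_nonneg fun a _ => by positivity)
                rw [abs_mul, mul_comm (|(A ^ t) a i|)]
                exact mul_le_mul_of_nonneg_left (ht a i) (abs_nonneg _)
            _ = ∑ a, |E a b| * r ^ t := mul_one _
      _ = CE * r ^ t := by simp only [hCE, Finset.sum_mul]; exact Finset.sum_comm
  -- summability
  letI : NormedAddCommGroup (Matrix (Fin n) (Fin n) ℝ) := Matrix.normedAddCommGroup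
  have hCE0 : 0 ≤ CE := Finset.sum_nonneg fun _ _ => Finset.sum_nonneg fun _ _ => abs_nonneg _
  have hsummable : Summable f := by
    letI : NormedSpace ℝ (Matrix (Fin n) (Fin n) ℝ) := Matrix.normedSpace
    haveI : CompleteSpace (Matrix (Fin n) (Fin n) ℝ) := FiniteDimensional.complete ℝ _
    refine Summable.of_norm_bounded_eventually_nat (g := fun t => CE * r ^ t)
      ((summable_geometric_of_lt_one hr0 hr1).mul_left CE) ?_
    filter_upwards [hbound] with t ht
    rw [Matrix.norm_le_iff (by positivity)]
    intro i j
    simpa [Real.norm_eq_abs] using ht i j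
  set S := ∑' t, f t with hS
  have hhs : HasSum f S := hsummable.hasSum
  have key : ∀ x : Fin n → ℝ, HasSum (fun t => x ⬝ᵥ f t *ᵥ x) (x ⬝ᵥ S *ᵥ x) := by
    intro x
    let L : Matrix (Fin n) (Fin n) ℝ →ₗ[ℝ] ℝ :=
      { toFun := fun M => x ⬝ᵥ M *ᵥ x
        map_add' := fun M N => by simp [Matrix.add_mulVec, dotProduct_add]
        map_smul' := fun c M => by
          simp [Matrix.smul_mulVec, dotProduct_smul] }
    exact hhs.map L.toAddMonoidHom L.continuous_of_finiteDimensional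
  have hA0 : Tendsto (fun t => A ^ t) atTop (𝓝 0) := by
    refine tendsto_pi_nhds.mpr ?_
    intro i
    rw [tendsto_pi_nhds]
    intro j
    simp only [Matrix.zero_apply]
    refine squeeze_zero_norm' ?_ (tendsto_pow_atTop_nhds_zero_of_lt_one hr0 hr1)
    filter_upwards [hev] with t ht
    simpa [Real.norm_eq_abs] using ht i j
  have hSH : S.IsHermitian := by
    rw [Matrix.IsHermitian, hS, Matrix.conjTranspose_tsum]
    exact tsum_congr fun t => (hfPSD t).1
  constructor
  · -- P - S is PSD
    have hPH : P.IsHermitian := by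
      rw [Matrix.IsHermitian, Matrix.conjTranspose_eq_transpose_of_trivial]; exact hP
    refine .of_dotProduct_mulVec_nonneg (hPH.sub hSH) fun x => ?_
    rw [star_trivial]
    set g : ℕ → ℝ := fun t => ((A ^ t) *ᵥ x) ⬝ᵥ P *ᵥ ((A ^ t) *ᵥ x) with hgdef
    have hstep : ∀ t : ℕ, x ⬝ᵥ f t *ᵥ x ≤ g t - g (t + 1) := by
      intro t
      have h0 := hineq.dotProduct_mulVec_nonneg (A ^ t *ᵥ x)
      rw [star_trivial] at h0
      have h1 : (A ^ t *ᵥ x) ⬝ᵥ (Aᵀ * P * A) *ᵥ (A ^ t *ᵥ x) = g (t + 1) := by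
        rw [quad_congr, hgdef]
        simp only [Matrix.mulVec_mulVec, ← pow_succ']
      have hfq : x ⬝ᵥ f t *ᵥ x = (A ^ t *ᵥ x) ⬝ᵥ E *ᵥ (A ^ t *ᵥ x) := by
        have : f t = (A ^ t)ᵀ * E * (A ^ t) := by
          rw [hf]; simp [← Matrix.transpose_pow]
        rw [this, quad_congr]
      have hexp : (A ^ t *ᵥ x) ⬝ᵥ (-(Aᵀ * P * A - P + E)) *ᵥ (A ^ t *ᵥ x)
          = g t - g (t + 1) - (A ^ t *ᵥ x) ⬝ᵥ E *ᵥ (A ^ t *ᵥ x) := by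
        rw [← h1, hgdef]
        simp only [Matrix.neg_mulVec, Matrix.sub_mulVec, Matrix.add_mulVec,
          dotProduct_neg, dotProduct_sub, dotProduct_add]
        ring
      rw [hexp] at h0
      rw [hfq]
      linarith
    have hsum_le : ∀ T, ∑ t ∈ Finset.range T, x ⬝ᵥ f t *ᵥ x ≤ g 0 - g T := fun T =>
      le_trans (Finset.sum_le_sum fun t _ => hstep t)
        (le_of_eq (Finset.sum_range_sub' g T))
    have hgT : Tendsto g atTop (𝓝 0) := by
      have hc1 : Continuous fun M : Matrix (Fin n) (Fin n) ℝ => M *ᵥ x :=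
        continuous_id.matrix_mulVec continuous_const
      have hc : Continuous fun M : Matrix (Fin n) (Fin n) ℝ => (M *ᵥ x) ⬝ᵥ P *ᵥ (M *ᵥ x) :=
        hc1.dotProduct (continuous_const.matrix_mulVec hc1)
      have h := (hc.tendsto 0).comp hA0
      simpa [hgdef, Function.comp_def, Matrix.zero_mulVec] using h
    have h2 : Tendsto (fun T => g 0 - g T) atTop (𝓝 (g 0 - 0)) := tendsto_const_nhds.sub hgT
    have hle := le_of_tendsto_of_tendsto' (key x).tendsto_sum_nat h2 hsum_le
    have hg0 : g 0 = x ⬝ᵥ P *ᵥ x := by simp [hgdef]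
    rw [hg0, sub_zero] at hle
    rw [Matrix.sub_mulVec, dotProduct_sub, sub_nonneg]
    exact hle
  · refine .of_dotProduct_mulVec_nonneg hSH fun x => ?_
    rw [star_trivial]
    have hnn : ∀ t : ℕ, 0 ≤ x ⬝ᵥ f t *ᵥ x := fun t => by
      simpa [star_trivial] using (hfPSD t).dotProduct_mulVec_nonneg x
    have := tsum_nonneg (L := SummationFilter.unconditional ℕ) hnn
    rwa [(key x).tsum_eq] at this
end

section
/- Let Q, R be symmetric positive definite and suppose K ∈ ℝ^{m×n} and symmetric P_K ≻ 0 satisfy (A−BK)ᵀ U_K (A−BK) − P_K + Q + KᵀRK = 0 where U_K ⪰ 0. Then Kᵀ R K ⪯ P_K; in particular, ‖K‖² ≤ ‖P_K‖ / λ_min(R), so K is bounded in terms of P_K and R. -/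
open Matrix
open scoped RealInnerProductSpace

/-- Spectral (operator 2-) norm of a real matrix. -/
noncomputable def sNorm {m n : ℕ} (A : Matrix (Fin m) (Fin n) ℝ) : ℝ :=
  ‖(Matrix.toEuclideanLin A).toContinuousLinearMap‖

private theorem psd_sub_smul_aux {m : ℕ} (R : Matrix (Fin m) (Fin m) ℝ) (hR : R.IsHermitian)
    (c : ℝ) (hc : ∀ i, c ≤ hR.eigenvalues i) : (R - c • 1).PosSemidef := by
  have key : R - c • 1 =
      (hR.eigenvectorUnitary : Matrix (Fin m) (Fin m) ℝ) *
        diagonal (fun i => hR.eigenvalues i - c) *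
        (hR.eigenvectorUnitary : Matrix (Fin m) (Fin m) ℝ)ᴴ := by
    have hU : (hR.eigenvectorUnitary : Matrix (Fin m) (Fin m) ℝ) *
        (hR.eigenvectorUnitary : Matrix (Fin m) (Fin m) ℝ)ᴴ = 1 := by
      simpa [star_eq_conjTranspose] using
        (Matrix.mem_unitaryGroup_iff).mp hR.eigenvectorUnitary.2
    have hd : diagonal (fun i => hR.eigenvalues i - c) =
        diagonal (RCLike.ofReal ∘ hR.eigenvalues) - c • 1 := by
      ext i j
      by_cases h : i = j <;> simp [h, diagonal, Matrix.one_apply, Matrix.smul_apply]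
    have hst : (hR.eigenvectorUnitary : Matrix (Fin m) (Fin m) ℝ)ᴴ =
        star (hR.eigenvectorUnitary : Matrix (Fin m) (Fin m) ℝ) := rfl
    have hs := hR.spectral_theorem
    simp only [Unitary.conjStarAlgAut_apply, Unitary.coe_star] at hs
    rw [hd, mul_sub, sub_mul, hst, ← hs]
    congr 1
    rw [Matrix.mul_smul, Matrix.smul_mul, mul_one, ← hst, hU]
  rw [key]
  exact (posSemidef_diagonal_iff.mpr fun i => sub_nonneg.2 (hc i)).mul_mul_conjTranspose_same _

/-- Boundedness of admissible gains: if
`(A−BK)ᵀ U_K (A−BK) − P_K + Q + KᵀRK = 0` with `Q, R ≻ 0`, `P_K ≻ 0`,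
`U_K ⪰ 0`, then `KᵀRK ⪯ P_K` and `‖K‖² ≤ ‖P_K‖ / λ_min(R)`. -/
theorem gain_bounded_by_cost {n m : ℕ}
    (A : Matrix (Fin n) (Fin n) ℝ) (B : Matrix (Fin n) (Fin m) ℝ)
    (K : Matrix (Fin m) (Fin n) ℝ)
    (Q PK UK : Matrix (Fin n) (Fin n) ℝ) (R : Matrix (Fin m) (Fin m) ℝ)
    (hQ : Q.PosDef) (hR : R.PosDef) (hPK : PK.PosDef) (hUK : UK.PosSemidef)
    (heq : (A - B * K)ᵀ * UK * (A - B * K) - PK + Q + Kᵀ * R * K = 0) :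
    (PK - Kᵀ * R * K).PosSemidef ∧
    sNorm K ^ 2 ≤ sNorm PK / (⨅ i, hR.1.eigenvalues i) := by
  -- Part 1
  have h1 : PK - Kᵀ * R * K = (A - B * K)ᵀ * UK * (A - B * K) + Q := by
    have h' : ((A - B * K)ᵀ * UK * (A - B * K) + Q + Kᵀ * R * K) - PK = 0 := by
      rw [← heq]; abel
    have h'' := sub_eq_zero.mp h'
    rw [← h'']; abel
  have hT : (A - B * K)ᵀ = (A - B * K)ᴴ := (conjTranspose_eq_transpose_of_trivial _).symm
  have hpsd1 : (PK - Kᵀ * R * K).PosSemidef := by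
    rw [h1, hT]
    exact (hUK.conjTranspose_mul_mul_same _).add hQ.posSemidef
  refine ⟨hpsd1, ?_⟩
  -- Part 2
  set c : ℝ := ⨅ i, hR.1.eigenvalues i with hc_def
  cases isEmpty_or_nonempty (Fin m) with
  | inl hEmpty =>
    have hK0 : (Matrix.toEuclideanLin K).toContinuousLinearMap = 0 := by
      ext x i
      exact hEmpty.elim i
    have : sNorm K = 0 := by rw [sNorm, hK0, norm_zero]
    rw [this]
    have hc0 : c = 0 := by
      rw [hc_def, iInf_of_isEmpty, Real.sInf_empty]
    rw [hc0, div_zero]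
    norm_num
  | inr hNonempty =>
    have hbdd : BddBelow (Set.range hR.1.eigenvalues) := (Set.finite_range _).bddBelow
    have hcle : ∀ i, c ≤ hR.1.eigenvalues i := fun i => ciInf_le hbdd i
    have hcpos : 0 < c := by
      obtain ⟨i, hi⟩ := exists_eq_ciInf_of_finite (f := hR.1.eigenvalues)
      rw [hc_def, ← hi]
      exact hR.eigenvalues_pos i
    -- K^T R K - c K^T K is PSD
    have h2 : (Kᵀ * R * K - c • (Kᵀ * K)).PosSemidef := by
      have := (psd_sub_smul_aux R hR.1 c hcle).conjTranspose_mul_mul_same K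
      have heq2 : Kᴴ * (R - c • 1) * K = Kᵀ * R * K - c • (Kᵀ * K) := by
        rw [conjTranspose_eq_transpose_of_trivial]
        simp [Matrix.mul_sub, Matrix.sub_mul, Matrix.mul_smul, Matrix.smul_mul, Matrix.mul_one]
      rwa [heq2] at this
    have h3 : (PK - c • (Kᵀ * K)).PosSemidef := by
      have := hpsd1.add h2
      have e : (PK - Kᵀ * R * K) + (Kᵀ * R * K - c • (Kᵀ * K)) = PK - c • (Kᵀ * K) := by abel
      rwa [e] at this
    -- quadratic form bound
    have hquad : ∀ x : Fin n → ℝ,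
        c * ((K *ᵥ x) ⬝ᵥ (K *ᵥ x)) ≤ x ⬝ᵥ (PK *ᵥ x) := by
      intro x
      have := h3.dotProduct_mulVec_nonneg x
      simp only [RCLike.re_to_real, Matrix.sub_mulVec, Matrix.smul_mulVec,
        dotProduct_sub, dotProduct_smul, star_trivial, smul_eq_mul] at this
      have hKx : x ⬝ᵥ ((Kᵀ * K) *ᵥ x) = (K *ᵥ x) ⬝ᵥ (K *ᵥ x) := by
        rw [← Matrix.mulVec_mulVec, Matrix.mulVec_transpose, dotProduct_comm,
          ← Matrix.dotProduct_mulVec]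
      rw [hKx] at this
      linarith
    -- operator norm bound
    set T := (Matrix.toEuclideanLin K).toContinuousLinearMap with hT_def
    set S := (Matrix.toEuclideanLin PK).toContinuousLinearMap with hS_def
    have hkey : ∀ x : EuclideanSpace ℝ (Fin n),
        c * ‖T x‖ ^ 2 ≤ sNorm PK * ‖x‖ ^ 2 := by
      intro x
      have hTx : ‖T x‖ ^ 2 = (K *ᵥ (WithLp.equiv 2 _ x)) ⬝ᵥ (K *ᵥ (WithLp.equiv 2 _ x)) := by
        rw [← real_inner_self_eq_norm_sq]
        simp only [hT_def, LinearMap.coe_toContinuousLinearMap']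
        rw [PiLp.inner_apply]
        simp [Matrix.toEuclideanLin_apply, dotProduct]
        exact Finset.sum_congr rfl fun i _ => sq _
      have hSx : (inner ℝ x (S x) : ℝ) = (WithLp.equiv 2 _ x) ⬝ᵥ (PK *ᵥ (WithLp.equiv 2 _ x)) := by
        simp only [hS_def, LinearMap.coe_toContinuousLinearMap']
        rw [PiLp.inner_apply]
        simp [Matrix.toEuclideanLin_apply, dotProduct]
        exact Finset.sum_congr rfl fun i _ => mul_comm _ _
      have h5 : (inner ℝ x (S x) : ℝ) ≤ sNorm PK * ‖x‖ ^ 2 := by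
        calc (inner ℝ x (S x) : ℝ) ≤ ‖x‖ * ‖S x‖ := real_inner_le_norm _ _
          _ ≤ ‖x‖ * (‖S‖ * ‖x‖) := by
              exact mul_le_mul_of_nonneg_left (S.le_opNorm x) (norm_nonneg x)
          _ = sNorm PK * ‖x‖ ^ 2 := by rw [sNorm, ← hS_def]; ring
      calc c * ‖T x‖ ^ 2 = c * ((K *ᵥ (WithLp.equiv 2 _ x)) ⬝ᵥ (K *ᵥ (WithLp.equiv 2 _ x))) := by
            rw [hTx]
        _ ≤ (WithLp.equiv 2 _ x) ⬝ᵥ (PK *ᵥ (WithLp.equiv 2 _ x)) := hquad _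
        _ = (inner ℝ x (S x) : ℝ) := hSx.symm
        _ ≤ sNorm PK * ‖x‖ ^ 2 := h5
    have hdivnn : 0 ≤ sNorm PK / c := div_nonneg (norm_nonneg _) hcpos.le
    have hopn : sNorm K ≤ Real.sqrt (sNorm PK / c) := by
      rw [sNorm]
      apply ContinuousLinearMap.opNorm_le_bound _ (Real.sqrt_nonneg _)
      intro x
      have h6 : ‖T x‖ ^ 2 ≤ (Real.sqrt (sNorm PK / c) * ‖x‖) ^ 2 := by
        have := hkey x
        rw [mul_pow, Real.sq_sqrt hdivnn, div_mul_eq_mul_div]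
        rw [le_div_iff₀ hcpos]
        nlinarith
      have h7 : 0 ≤ Real.sqrt (sNorm PK / c) * ‖x‖ := by positivity
      nlinarith [norm_nonneg (T x)]
    calc sNorm K ^ 2 ≤ Real.sqrt (sNorm PK / c) ^ 2 := by
          apply pow_le_pow_left₀ ?_ hopn
          rw [sNorm]; exact norm_nonneg _
      _ = sNorm PK / c := Real.sq_sqrt hdivnn
end
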